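/- Let K be a field of characteristic zero and let a, b, c, d, u, w ∈ K with u ≠ 1 and w² = a²(u⁶ + 1) + 2ab(u⁵ + u) + (b² + 2ab − 4cd)(u⁴ + u²) + (2a² + 2b² − 4c² − 4d²)u³. Set x₁ = u/(u−1)² and y₁ = w/(u−1)³. Then y₁² = A₁x₁³ + B₁x₁² + C₁x₁ + D₁, where A₁ = 4(a + b)² − 4(c + d)², B₁ = (a + b)(9a + b) − 4cd, C₁ = 6a² + 2ab, and D₁ = a². -/

import Mathlib

set_option maxHeartbeats 1000000 in
/-- Given `w² = a²(u⁶+1) + 2ab(u⁵+u) + (b²+2ab−4cd)(u⁴+u²) + (2a²+2b²−4c²−4d²)u³` with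
`u ≠ 1`, the substitution `x₁ = u/(u−1)²`, `y₁ = w/(u−1)³` satisfies
`y₁² = A₁x₁³ + B₁x₁² + C₁x₁ + D₁` with `A₁ = 4(a+b)² − 4(c+d)²`,
`B₁ = (a+b)(9a+b) − 4cd`, `C₁ = 6a² + 2ab`, `D₁ = a²`. -/
theorem statement10 {K : Type*} [Field K] [CharZero K] (a b c d u w : K)
    (hu : u ≠ 1)
    (h : w ^ 2 = a ^ 2 * (u ^ 6 + 1) + 2 * a * b * (u ^ 5 + u) +
        (b ^ 2 + 2 * a * b - 4 * c * d) * (u ^ 4 + u ^ 2) +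
        (2 * a ^ 2 + 2 * b ^ 2 - 4 * c ^ 2 - 4 * d ^ 2) * u ^ 3)
    (x₁ y₁ : K) (hx₁ : x₁ = u / (u - 1) ^ 2) (hy₁ : y₁ = w / (u - 1) ^ 3) :
    y₁ ^ 2 = (4 * (a + b) ^ 2 - 4 * (c + d) ^ 2) * x₁ ^ 3 +
        ((a + b) * (9 * a + b) - 4 * c * d) * x₁ ^ 2 +
        (6 * a ^ 2 + 2 * a * b) * x₁ + a ^ 2 := by
  have hv : u - 1 ≠ 0 := sub_ne_zero.mpr hu
  subst hx₁ hy₁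
  field_simp
  linear_combination h
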